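/- The minimum classical extension of IA₁ + AC₀₁ is IA₁ + AC₀₁ + (AC₀₁)^g, where (AC₀₁)^g is the schema of Gödel–Gentzen negative translations of all instances of AC₀₁. -/

import Mathlib

/-!
A deep embedding of the two-sorted language of intuitionistic analysis
(Kleene-Vesley), with number variables and one-place function (choice
sequence) variables, finitely many constants for primitive recursive
function(al)s (successor, +, ·, truncated subtraction ∸, pairing ⟨·,·⟩,
finite-sequence coding: concatenation *, singleton code ⟨s⟩, empty code ⟨⟩,
length lh, the Seq predicate, Kleene's T-predicate and U-function, and the
course-of-values functional ᾱ(x)), λ-abstraction with λ-reduction,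
intuitionistic two-sorted predicate logic, the Gödel–Gentzen negative
translation g, and the axiom schemas of the paper
"Calibrating the negative interpretation" (J.R. Moschovakis).
-/

namespace NegInterp

/-! Terms (type 0) and functors (type 1). -/
mutual
inductive Term : Type
  | var   : ℕ → Term
  | zero  : Term
  | succ  : Term → Term
  | add   : Term → Term → Term
  | mul   : Term → Term → Term
  | sub   : Term → Term → Term           -- truncated subtraction
  | pair  : Term → Term → Term           -- ⟨s,t⟩
  | cat   : Term → Term → Term           -- concatenation w ∗ v of sequence codes
  | sing  : Term → Term                  -- ⟨s⟩
  | empt  : Term                         -- ⟨ ⟩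
  | lh    : Term → Term                  -- length of a sequence code
  | seqc  : Term → Term                  -- characteristic function of Seq
  | kT    : Term → Term → Term → Term    -- characteristic function of Kleene's T
  | kU    : Term → Term                  -- Kleene's result-extraction U
  | app   : Func → Term → Term           -- φ(t)
  | bar   : Func → Term → Term           -- ᾱ(t), the code of (α(0),…,α(t−1))
inductive Func : Type
  | fvar : ℕ → Func
  | lam  : ℕ → Term → Func               -- λx.t
end

open Term Func

/-- Coding of finite sequences of naturals by naturals (every natural is a code). -/
def listCode (l : List ℕ) : ℕ := Encodable.encode l
def listDec (n : ℕ) : List ℕ := Denumerable.ofNat (List ℕ) n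

/-- Kleene's T-predicate: y codes a (fuel, value) pair witnessing that the
machine with code e halts on input x with the given value. -/
def KTmeta (e x y : ℕ) : Prop :=
  Nat.Partrec.Code.evaln y.unpair.1 (Denumerable.ofNat Nat.Partrec.Code e) x = some y.unpair.2

instance (e x y : ℕ) : Decidable (KTmeta e x y) := by unfold KTmeta; infer_instance

/-! Standard (full classical ω-model) interpretation of terms and functors,
used only to state the defining axioms of the primitive recursive constants. -/
mutual
def evalT (ρ : ℕ → ℕ) (σ : ℕ → ℕ → ℕ) : Term → ℕ
  | .var n => ρ n
  | .zero => 0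
  | .succ t => evalT ρ σ t + 1
  | .add s t => evalT ρ σ s + evalT ρ σ t
  | .mul s t => evalT ρ σ s * evalT ρ σ t
  | .sub s t => evalT ρ σ s - evalT ρ σ t
  | .pair s t => Nat.pair (evalT ρ σ s) (evalT ρ σ t)
  | .cat s t => listCode (listDec (evalT ρ σ s) ++ listDec (evalT ρ σ t))
  | .sing t => listCode [evalT ρ σ t]
  | .empt => listCode []
  | .lh t => (listDec (evalT ρ σ t)).length
  | .seqc _ => 0      -- under this coding every number codes a finite sequence
  | .kT e x y => if KTmeta (evalT ρ σ e) (evalT ρ σ x) (evalT ρ σ y) then 0 else 1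
  | .kU y => (Nat.unpair (evalT ρ σ y)).2
  | .app φ t => evalF ρ σ φ (evalT ρ σ t)
  | .bar φ t => listCode ((List.range (evalT ρ σ t)).map (evalF ρ σ φ))
def evalF (ρ : ℕ → ℕ) (σ : ℕ → ℕ → ℕ) : Func → ℕ → ℕ
  | .fvar n => σ n
  | .lam x t => fun m => evalT (Function.update ρ x m) σ t
end

/-! Free number variables of a term / functor. -/
mutual
def tFN : Term → Set ℕ
  | .var n => {n}
  | .zero => ∅
  | .empt => ∅
  | .succ t => tFN t
  | .sing t => tFN t
  | .lh t => tFN t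
  | .seqc t => tFN t
  | .kU t => tFN t
  | .add s t => tFN s ∪ tFN t
  | .mul s t => tFN s ∪ tFN t
  | .sub s t => tFN s ∪ tFN t
  | .pair s t => tFN s ∪ tFN t
  | .cat s t => tFN s ∪ tFN t
  | .kT e x y => tFN e ∪ tFN x ∪ tFN y
  | .app φ t => fFN φ ∪ tFN t
  | .bar φ t => fFN φ ∪ tFN t
def fFN : Func → Set ℕ
  | .fvar _ => ∅
  | .lam x t => tFN t \ {x}
end

/-! Free function variables of a term / functor. -/
mutual
def tFF : Term → Set ℕ
  | .var _ => ∅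
  | .zero => ∅
  | .empt => ∅
  | .succ t => tFF t
  | .sing t => tFF t
  | .lh t => tFF t
  | .seqc t => tFF t
  | .kU t => tFF t
  | .add s t => tFF s ∪ tFF t
  | .mul s t => tFF s ∪ tFF t
  | .sub s t => tFF s ∪ tFF t
  | .pair s t => tFF s ∪ tFF t
  | .cat s t => tFF s ∪ tFF t
  | .kT e x y => tFF e ∪ tFF x ∪ tFF y
  | .app φ t => fFF φ ∪ tFF t
  | .bar φ t => fFF φ ∪ tFF t
def fFF : Func → Set ℕ
  | .fvar a => {a}
  | .lam _ t => tFF t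
end

/-! Substitution of a term for a number variable in terms / functors. -/
mutual
def tSubN (n : ℕ) (u : Term) : Term → Term
  | .var m => if m = n then u else .var m
  | .zero => .zero
  | .empt => .empt
  | .succ t => .succ (tSubN n u t)
  | .sing t => .sing (tSubN n u t)
  | .lh t => .lh (tSubN n u t)
  | .seqc t => .seqc (tSubN n u t)
  | .kU t => .kU (tSubN n u t)
  | .add s t => .add (tSubN n u s) (tSubN n u t)
  | .mul s t => .mul (tSubN n u s) (tSubN n u t)
  | .sub s t => .sub (tSubN n u s) (tSubN n u t)
  | .pair s t => .pair (tSubN n u s) (tSubN n u t)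
  | .cat s t => .cat (tSubN n u s) (tSubN n u t)
  | .kT e x y => .kT (tSubN n u e) (tSubN n u x) (tSubN n u y)
  | .app φ t => .app (fSubN n u φ) (tSubN n u t)
  | .bar φ t => .bar (fSubN n u φ) (tSubN n u t)
def fSubN (n : ℕ) (u : Term) : Func → Func
  | .fvar a => .fvar a
  | .lam x t => if x = n then .lam x t else .lam x (tSubN n u t)
end

/-! Substitution of a functor for a function variable in terms / functors. -/
mutual
def tSubF (a : ℕ) (ψ : Func) : Term → Term
  | .var m => .var m
  | .zero => .zero
  | .empt => .empt
  | .succ t => .succ (tSubF a ψ t)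
  | .sing t => .sing (tSubF a ψ t)
  | .lh t => .lh (tSubF a ψ t)
  | .seqc t => .seqc (tSubF a ψ t)
  | .kU t => .kU (tSubF a ψ t)
  | .add s t => .add (tSubF a ψ s) (tSubF a ψ t)
  | .mul s t => .mul (tSubF a ψ s) (tSubF a ψ t)
  | .sub s t => .sub (tSubF a ψ s) (tSubF a ψ t)
  | .pair s t => .pair (tSubF a ψ s) (tSubF a ψ t)
  | .cat s t => .cat (tSubF a ψ s) (tSubF a ψ t)
  | .kT e x y => .kT (tSubF a ψ e) (tSubF a ψ x) (tSubF a ψ y)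
  | .app φ t => .app (fSubF a ψ φ) (tSubF a ψ t)
  | .bar φ t => .bar (fSubF a ψ φ) (tSubF a ψ t)
def fSubF (a : ℕ) (ψ : Func) : Func → Func
  | .fvar b => if b = a then ψ else .fvar b
  | .lam x t => .lam x (tSubF a ψ t)
end

/-! "u is free for (the number variable) n" in a term/functor
(no free occurrence of n lies within a λ binding a variable free in u). -/
mutual
def tFForN (u : Term) (n : ℕ) : Term → Prop
  | .var _ => True
  | .zero => True
  | .empt => True
  | .succ t => tFForN u n t
  | .sing t => tFForN u n t
  | .lh t => tFForN u n t
  | .seqc t => tFForN u n t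
  | .kU t => tFForN u n t
  | .add s t => tFForN u n s ∧ tFForN u n t
  | .mul s t => tFForN u n s ∧ tFForN u n t
  | .sub s t => tFForN u n s ∧ tFForN u n t
  | .pair s t => tFForN u n s ∧ tFForN u n t
  | .cat s t => tFForN u n s ∧ tFForN u n t
  | .kT e x y => tFForN u n e ∧ tFForN u n x ∧ tFForN u n y
  | .app φ t => fFForN u n φ ∧ tFForN u n t
  | .bar φ t => fFForN u n φ ∧ tFForN u n t
def fFForN (u : Term) (n : ℕ) : Func → Prop
  | .fvar _ => True
  | .lam x t => x = n ∨ n ∉ tFN t ∨ (x ∉ tFN u ∧ tFForN u n t)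
end

/-! "ψ is free for (the function variable) a" in a term/functor. -/
mutual
def tFForF (ψ : Func) (a : ℕ) : Term → Prop
  | .var _ => True
  | .zero => True
  | .empt => True
  | .succ t => tFForF ψ a t
  | .sing t => tFForF ψ a t
  | .lh t => tFForF ψ a t
  | .seqc t => tFForF ψ a t
  | .kU t => tFForF ψ a t
  | .add s t => tFForF ψ a s ∧ tFForF ψ a t
  | .mul s t => tFForF ψ a s ∧ tFForF ψ a t
  | .sub s t => tFForF ψ a s ∧ tFForF ψ a t
  | .pair s t => tFForF ψ a s ∧ tFForF ψ a t
  | .cat s t => tFForF ψ a s ∧ tFForF ψ a t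
  | .kT e x y => tFForF ψ a e ∧ tFForF ψ a x ∧ tFForF ψ a y
  | .app φ t => fFForF ψ a φ ∧ tFForF ψ a t
  | .bar φ t => fFForF ψ a φ ∧ tFForF ψ a t
def fFForF (ψ : Func) (a : ℕ) : Func → Prop
  | .fvar _ => True
  | .lam x t => a ∉ tFF t ∨ (x ∉ fFN ψ ∧ tFForF ψ a t)
end

/-- Formulas of the two-sorted language; prime formulas are equations between
terms of type 0 (equality of type 1 is defined extensionally). -/
inductive Formula : Type
  | eq     : Term → Term → Formula
  | falsum : Formula
  | and    : Formula → Formula → Formula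
  | or     : Formula → Formula → Formula
  | imp    : Formula → Formula → Formula
  | allN   : ℕ → Formula → Formula
  | exN    : ℕ → Formula → Formula
  | allF   : ℕ → Formula → Formula
  | exF    : ℕ → Formula → Formula

namespace Formula

/-- ¬A -/
def neg (A : Formula) : Formula := A.imp .falsum
/-- ¬¬A -/
def nneg (A : Formula) : Formula := neg (neg A)
/-- A ↔ B -/
def iff (A B : Formula) : Formula := (A.imp B).and (B.imp A)

end Formula

open Formula

/-- s ≤ t, expressed by the primitive recursive constant ∸. -/
def tle (s t : Term) : Formula := .eq (Term.sub s t) Term.zero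
/-- s < t -/
def tlt (s t : Term) : Formula := tle (Term.succ s) t
/-- Seq(w) : w codes a finite sequence. -/
def seqF (t : Term) : Formula := .eq (Term.seqc t) Term.zero

/-- Free number variables of a formula. -/
def freeN : Formula → Set ℕ
  | .eq s t => tFN s ∪ tFN t
  | .falsum => ∅
  | .and A B => freeN A ∪ freeN B
  | .or A B => freeN A ∪ freeN B
  | .imp A B => freeN A ∪ freeN B
  | .allN x A => freeN A \ {x}
  | .exN x A => freeN A \ {x}
  | .allF _ A => freeN A
  | .exF _ A => freeN A

/-- Free function variables of a formula. -/
def freeF : Formula → Set ℕ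
  | .eq s t => tFF s ∪ tFF t
  | .falsum => ∅
  | .and A B => freeF A ∪ freeF B
  | .or A B => freeF A ∪ freeF B
  | .imp A B => freeF A ∪ freeF B
  | .allN _ A => freeF A
  | .exN _ A => freeF A
  | .allF a A => freeF A \ {a}
  | .exF a A => freeF A \ {a}

/-- Substitution A[u/n] of a term u for the number variable n. -/
def subN (n : ℕ) (u : Term) : Formula → Formula
  | .eq s t => .eq (tSubN n u s) (tSubN n u t)
  | .falsum => .falsum
  | .and A B => .and (subN n u A) (subN n u B)
  | .or A B => .or (subN n u A) (subN n u B)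
  | .imp A B => .imp (subN n u A) (subN n u B)
  | .allN x A => if x = n then .allN x A else .allN x (subN n u A)
  | .exN x A => if x = n then .exN x A else .exN x (subN n u A)
  | .allF a A => .allF a (subN n u A)
  | .exF a A => .exF a (subN n u A)

/-- Substitution A[ψ/a] of a functor ψ for the function variable a. -/
def subF (a : ℕ) (ψ : Func) : Formula → Formula
  | .eq s t => .eq (tSubF a ψ s) (tSubF a ψ t)
  | .falsum => .falsum
  | .and A B => .and (subF a ψ A) (subF a ψ B)
  | .or A B => .or (subF a ψ A) (subF a ψ B)
  | .imp A B => .imp (subF a ψ A) (subF a ψ B)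
  | .allN x A => .allN x (subF a ψ A)
  | .exN x A => .exN x (subF a ψ A)
  | .allF b A => if b = a then .allF b A else .allF b (subF a ψ A)
  | .exF b A => if b = a then .exF b A else .exF b (subF a ψ A)

/-- "The term u is free for the number variable n in A". -/
def FreeForN (u : Term) (n : ℕ) : Formula → Prop
  | .eq s t => tFForN u n s ∧ tFForN u n t
  | .falsum => True
  | .and A B => FreeForN u n A ∧ FreeForN u n B
  | .or A B => FreeForN u n A ∧ FreeForN u n B
  | .imp A B => FreeForN u n A ∧ FreeForN u n B
  | .allN m A => m = n ∨ n ∉ freeN A ∨ (m ∉ tFN u ∧ FreeForN u n A)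
  | .exN m A => m = n ∨ n ∉ freeN A ∨ (m ∉ tFN u ∧ FreeForN u n A)
  | .allF b A => n ∉ freeN A ∨ (b ∉ tFF u ∧ FreeForN u n A)
  | .exF b A => n ∉ freeN A ∨ (b ∉ tFF u ∧ FreeForN u n A)

/-- "The functor ψ is free for the function variable a in A". -/
def FreeForF (ψ : Func) (a : ℕ) : Formula → Prop
  | .eq s t => tFForF ψ a s ∧ tFForF ψ a t
  | .falsum => True
  | .and A B => FreeForF ψ a A ∧ FreeForF ψ a B
  | .or A B => FreeForF ψ a A ∧ FreeForF ψ a B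
  | .imp A B => FreeForF ψ a A ∧ FreeForF ψ a B
  | .allN m A => a ∉ freeF A ∨ (m ∉ fFN ψ ∧ FreeForF ψ a A)
  | .exN m A => a ∉ freeF A ∨ (m ∉ fFN ψ ∧ FreeForF ψ a A)
  | .allF b A => b = a ∨ a ∉ freeF A ∨ (b ∉ fFF ψ ∧ FreeForF ψ a A)
  | .exF b A => b = a ∨ a ∉ freeF A ∨ (b ∉ fFF ψ ∧ FreeForF ψ a A)

/-- Derivability from a set of (mathematical) axioms by two-sorted
intuitionistic predicate logic with equality at type 0 as sole prime relation;
a Hilbert-style system with modus ponens and generalization. -/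
inductive Prov (T : Set Formula) : Formula → Prop
  | ax {A : Formula} (h : A ∈ T) : Prov T A
  | k {A B : Formula} : Prov T (A.imp (B.imp A))
  | s {A B C : Formula} : Prov T ((A.imp (B.imp C)).imp ((A.imp B).imp (A.imp C)))
  | andI {A B : Formula} : Prov T (A.imp (B.imp (A.and B)))
  | andE1 {A B : Formula} : Prov T ((A.and B).imp A)
  | andE2 {A B : Formula} : Prov T ((A.and B).imp B)
  | orI1 {A B : Formula} : Prov T (A.imp (A.or B))
  | orI2 {A B : Formula} : Prov T (B.imp (A.or B))
  | orE {A B C : Formula} : Prov T ((A.imp C).imp ((B.imp C).imp ((A.or B).imp C)))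
  | exfalso {A : Formula} : Prov T (Formula.falsum.imp A)
  | mp {A B : Formula} : Prov T (A.imp B) → Prov T A → Prov T B
  | allNE {n : ℕ} {A : Formula} {u : Term} (h : FreeForN u n A) :
      Prov T ((Formula.allN n A).imp (subN n u A))
  | allNI {n : ℕ} {A B : Formula} (h : n ∉ freeN A) :
      Prov T (A.imp B) → Prov T (A.imp (Formula.allN n B))
  | exNI {n : ℕ} {A : Formula} {u : Term} (h : FreeForN u n A) :
      Prov T ((subN n u A).imp (Formula.exN n A))
  | exNE {n : ℕ} {A B : Formula} (h : n ∉ freeN B) :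
      Prov T (A.imp B) → Prov T ((Formula.exN n A).imp B)
  | allFE {a : ℕ} {A : Formula} {ψ : Func} (h : FreeForF ψ a A) :
      Prov T ((Formula.allF a A).imp (subF a ψ A))
  | allFI {a : ℕ} {A B : Formula} (h : a ∉ freeF A) :
      Prov T (A.imp B) → Prov T (A.imp (Formula.allF a B))
  | exFI {a : ℕ} {A : Formula} {ψ : Func} (h : FreeForF ψ a A) :
      Prov T ((subF a ψ A).imp (Formula.exF a A))
  | exFE {a : ℕ} {A B : Formula} (h : a ∉ freeF B) :
      Prov T (A.imp B) → Prov T ((Formula.exF a A).imp B)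
  | genN {n : ℕ} {A : Formula} : Prov T A → Prov T (Formula.allN n A)
  | genF {a : ℕ} {A : Formula} : Prov T A → Prov T (Formula.allF a A)

/-- Two systems (sets of axioms over the same language) have the same theorems. -/
def SameTheory (T₁ T₂ : Set Formula) : Prop := ∀ A, Prov T₁ A ↔ Prov T₂ A

/-- T₁ is a subsystem of T₂: every theorem of T₁ is a theorem of T₂. -/
def Subsystem (T₁ T₂ : Set Formula) : Prop := ∀ A, Prov T₁ A → Prov T₂ A

/-- The Gödel–Gentzen negative translation: hereditarily replace A∨B by
¬(¬A & ¬B) and ∃A by ¬∀¬A (prime formulas, being equations between terms of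
type 0, are their own translations). -/
def gTrans : Formula → Formula
  | .eq s t => .eq s t
  | .falsum => .falsum
  | .and A B => .and (gTrans A) (gTrans B)
  | .or A B => Formula.neg ((Formula.neg (gTrans A)).and (Formula.neg (gTrans B)))
  | .imp A B => .imp (gTrans A) (gTrans B)
  | .allN x A => .allN x (gTrans A)
  | .exN x A => Formula.neg (.allN x (Formula.neg (gTrans A)))
  | .allF a A => .allF a (gTrans A)
  | .exF a A => Formula.neg (.allF a (Formula.neg (gTrans A)))

/-! ### The base system IA₁ -/

/-- Universally valid equations: the defining axioms of the finitely many
primitive recursive constants of the language (all equations true in the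
intended interpretation under every assignment). -/
def validEq : Set Formula :=
  {F | ∃ s t : Term, F = Formula.eq s t ∧ ∀ ρ σ, evalT ρ σ s = evalT ρ σ t}

/-- Leibniz equality schema (includes the open equality axiom
∀x∀y(x=y → α(x)=α(y))). -/
def eqAx : Set Formula :=
  {F | ∃ (n : ℕ) (s t : Term) (A : Formula),
    FreeForN s n A ∧ FreeForN t n A ∧
    F = (Formula.eq s t).imp ((subN n s A).imp (subN n t A))}

/-- Successor axioms. -/
def sucAx : Set Formula :=
  {F | ∃ s t : Term, F = (Formula.eq (Term.succ s) (Term.succ t)).imp (.eq s t)} ∪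
  {F | ∃ t : Term, F = Formula.neg (.eq (Term.succ t) Term.zero)}

/-- Mathematical induction, for all formulas of the two-sorted language. -/
def indAx : Set Formula :=
  {F | ∃ (x : ℕ) (A : Formula),
    F = ((subN x Term.zero A).and
          (Formula.allN x (A.imp (subN x (Term.succ (Term.var x)) A)))).imp
        (Formula.allN x A)}

/-- λ-reduction: (λx.t)(s) = t[s/x], for s free for x in t. -/
def lamAx : Set Formula :=
  {F | ∃ (x : ℕ) (t s : Term), tFForN s x t ∧
    F = Formula.eq (Term.app (Func.lam x t) s) (tSubN x s t)}

/-- IA₁: two-sorted intuitionistic arithmetic. -/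
def IA1 : Set Formula := validEq ∪ eqAx ∪ sucAx ∪ indAx ∪ lamAx

/-- The double negation schema ¬¬A → A of classical logic. -/
def DNE : Set Formula := {F | ∃ A : Formula, F = (Formula.nneg A).imp A}

/-- The Gödel–Gentzen negative translations of all theorems of S + (¬¬A→A). -/
def gThms (S : Set Formula) : Set Formula :=
  {F | ∃ A : Formula, Prov (S ∪ DNE) A ∧ F = gTrans A}

/-- The minimum classical extension S^{+g} of S: the least extension of S
proving the negative translation of every theorem of S + (¬¬A→A). -/
def minClassExt (S : Set Formula) : Set Formula := S ∪ gThms S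

/-! ### Classes of formulas -/

/-- "Quantifier-free" formulas: no function quantifiers and only bounded
number quantifiers. -/
inductive IsQF : Formula → Prop
  | eq (s t : Term) : IsQF (.eq s t)
  | falsum : IsQF .falsum
  | and {A B} : IsQF A → IsQF B → IsQF (A.and B)
  | or {A B} : IsQF A → IsQF B → IsQF (A.or B)
  | imp {A B} : IsQF A → IsQF B → IsQF (A.imp B)
  | ballN {x t A} (h : x ∉ tFN t) (hA : IsQF A) :
      IsQF (.allN x ((tle (Term.var x) t).imp A))
  | bexN {x t A} (h : x ∉ tFN t) (hA : IsQF A) :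
      IsQF (.exN x ((tle (Term.var x) t).and A))

/-- Arithmetical formulas: no function quantifiers (function parameters allowed). -/
def IsArith : Formula → Prop
  | .eq _ _ => True
  | .falsum => True
  | .and A B => IsArith A ∧ IsArith B
  | .or A B => IsArith A ∧ IsArith B
  | .imp A B => IsArith A ∧ IsArith B
  | .allN _ A => IsArith A
  | .exN _ A => IsArith A
  | .allF _ _ => False
  | .exF _ _ => False

/-- Negative formulas: containing neither ∨ nor ∃. -/
def IsNeg : Formula → Prop
  | .eq _ _ => True
  | .falsum => True
  | .and A B => IsNeg A ∧ IsNeg B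
  | .or _ _ => False
  | .imp A B => IsNeg A ∧ IsNeg B
  | .allN _ A => IsNeg A
  | .exN _ _ => False
  | .allF _ A => IsNeg A
  | .exF _ _ => False

/-! ### The axiom schemas -/

/-- An instance of countable choice AC₀₀ : ∀x∃yA(x,y) → ∃α∀xA(x,α(x)). -/
def ac00Inst (x y a : ℕ) (A : Formula) : Formula :=
  (Formula.allN x (.exN y A)).imp
    (.exF a (.allN x (subN y (Term.app (Func.fvar a) (Term.var x)) A)))

def ac00Side (x y a : ℕ) (A : Formula) : Prop :=
  x ≠ y ∧ a ∉ freeF A ∧ FreeForN (Term.app (Func.fvar a) (Term.var x)) y A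

/-- AC₀₀ (full countable choice for numbers). -/
def AC00 : Set Formula :=
  {F | ∃ x y a A, ac00Side x y a A ∧ F = ac00Inst x y a A}

/-- qf-AC₀₀. -/
def qfAC00 : Set Formula :=
  {F | ∃ x y a A, IsQF A ∧ ac00Side x y a A ∧ F = ac00Inst x y a A}

/-- AC^Ar₀₀ (arithmetical countable choice). -/
def arAC00 : Set Formula :=
  {F | ∃ x y a A, IsArith A ∧ ac00Side x y a A ∧ F = ac00Inst x y a A}

/-- ∃!y A, rendered as ∃yA & ∀y∀z(A & A[z/y] → y = z). -/
def exUnique (y z : ℕ) (A : Formula) : Formula :=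
  (Formula.exN y A).and
    (.allN y (.allN z ((A.and (subN y (Term.var z) A)).imp
      (.eq (Term.var y) (Term.var z)))))

/-- AC₀₀! (countable comprehension): ∀x∃!yA(x,y) → ∃α∀xA(x,α(x)). -/
def AC00u : Set Formula :=
  {F | ∃ x y z a A, z ≠ y ∧ z ∉ freeN A ∧ FreeForN (Term.var z) y A ∧
    ac00Side x y a A ∧
    F = (Formula.allN x (exUnique y z A)).imp
          (.exF a (.allN x (subN y (Term.app (Func.fvar a) (Term.var x)) A)))}

/-- AC₀₁ : ∀x∃αA(x,α) → ∃β∀xA(x,λy.β(⟨x,y⟩)). -/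
def AC01 : Set Formula :=
  {F | ∃ (x a b y : ℕ) (A : Formula), b ∉ freeF A ∧ b ≠ a ∧ y ≠ x ∧
    FreeForF (Func.lam y (Term.app (Func.fvar b)
      (Term.pair (Term.var x) (Term.var y)))) a A ∧
    F = (Formula.allN x (.exF a A)).imp
          (.exF b (.allN x (subF a (Func.lam y (Term.app (Func.fvar b)
            (Term.pair (Term.var x) (Term.var y)))) A)))}

/-- CF_d : ∀x(A(x) ∨ ¬A(x)) → ∃α∀x[α(x)≤1 & (α(x)=0 ↔ A(x))]. -/
def CFd : Set Formula :=
  {F | ∃ (x a : ℕ) (A : Formula), a ∉ freeF A ∧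
    F = (Formula.allN x (A.or (Formula.neg A))).imp
          (.exF a (.allN x ((tle (Term.app (Func.fvar a) (Term.var x))
              (Term.succ Term.zero)).and
            (Formula.iff (.eq (Term.app (Func.fvar a) (Term.var x)) Term.zero) A))))}

/-- WCF₀⁻ : ¬¬∃ζ∀x(ζ(x)=0 ↔ A(x)) for negative A. -/
def WCF0neg : Set Formula :=
  {F | ∃ (x z : ℕ) (A : Formula), IsNeg A ∧ z ∉ freeF A ∧
    F = Formula.nneg (.exF z (.allN x
      (Formula.iff (.eq (Term.app (Func.fvar z) (Term.var x)) Term.zero) A)))}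

/-- Markov's Principle MP₁ : ∀α(¬∀x¬α(x)=0 → ∃x α(x)=0). -/
def MP1 : Formula :=
  .allF 0 ((Formula.neg (.allN 0 (Formula.neg
      (.eq (Term.app (Func.fvar 0) (Term.var 0)) Term.zero)))).imp
    (.exN 0 (.eq (Term.app (Func.fvar 0) (Term.var 0)) Term.zero)))

/-- Σ⁰₁-DNS₀ : ∀α[∀x¬¬∃y α(⟨x,y⟩)=0 → ¬¬∀x∃y α(⟨x,y⟩)=0]. -/
def Sigma01DNS0 : Formula :=
  .allF 0 ((Formula.allN 0 (Formula.nneg (.exN 1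
      (.eq (Term.app (Func.fvar 0) (Term.pair (Term.var 0) (Term.var 1))) Term.zero)))).imp
    (Formula.nneg (.allN 0 (.exN 1
      (.eq (Term.app (Func.fvar 0) (Term.pair (Term.var 0) (Term.var 1))) Term.zero)))))

/-- DNS₁ : ∀ρ[∀α¬¬∃x ρ(ᾱ(x))=0 → ¬¬∀α∃x ρ(ᾱ(x))=0]. -/
def DNS1 : Formula :=
  .allF 0 ((Formula.allF 1 (Formula.nneg (.exN 0
      (.eq (Term.app (Func.fvar 0) (Term.bar (Func.fvar 1) (Term.var 0))) Term.zero)))).imp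
    (Formula.nneg (.allF 1 (.exN 0
      (.eq (Term.app (Func.fvar 0) (Term.bar (Func.fvar 1) (Term.var 0))) Term.zero)))))

/-- B(α) : α is a binary sequence, ∀x α(x) ≤ 1. -/
def binF (a x : ℕ) : Formula :=
  .allN x (tle (Term.app (Func.fvar a) (Term.var x)) (Term.succ Term.zero))

/-- GDK : ∀ρ[∀α_{B(α)}¬¬∃x ρ(ᾱ(x))=0 → ¬¬∀α_{B(α)}∃x ρ(ᾱ(x))=0]. -/
def GDK : Formula :=
  .allF 0 ((Formula.allF 1 ((binF 1 1).imp (Formula.nneg (.exN 0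
      (.eq (Term.app (Func.fvar 0) (Term.bar (Func.fvar 1) (Term.var 0))) Term.zero))))).imp
    (Formula.nneg (.allF 1 ((binF 1 1).imp (.exN 0
      (.eq (Term.app (Func.fvar 0) (Term.bar (Func.fvar 1) (Term.var 0))) Term.zero))))))

/-- FT₁ (the fan theorem):
∀ρ[∀α_{B(α)}∃x ρ(ᾱ(x))=0 → ∃n∀α_{B(α)}∃x≤n ρ(ᾱ(x))=0]. -/
def FT1 : Formula :=
  .allF 0 ((Formula.allF 1 ((binF 1 1).imp (.exN 0
      (.eq (Term.app (Func.fvar 0) (Term.bar (Func.fvar 1) (Term.var 0))) Term.zero)))).imp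
    (.exN 2 (.allF 1 ((binF 1 1).imp (.exN 0 ((tle (Term.var 0) (Term.var 2)).and
      (.eq (Term.app (Func.fvar 0) (Term.bar (Func.fvar 1) (Term.var 0))) Term.zero)))))))

/-- An instance of bar induction BI₁ with bar ρ (function variable r) and
inductive predicate A(w). -/
def biInst (r aa xv w s : ℕ) (A : Formula) : Formula :=
  ((Formula.allF aa (.exN xv (.eq
      (Term.app (Func.fvar r) (Term.bar (Func.fvar aa) (Term.var xv))) Term.zero))).and
    ((Formula.allN w (((seqF (Term.var w)).and
        (.eq (Term.app (Func.fvar r) (Term.var w)) Term.zero)).imp A)).and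
      (Formula.allN w (((seqF (Term.var w)).and
        (.allN s (subN w (Term.cat (Term.var w)
          (Term.sing (Term.succ (Term.var s)))) A))).imp A)))).imp
  (subN w Term.empt A)

/-- BI₁ (bar induction, Kleene's ˣ26.3b). -/
def BI1 : Set Formula :=
  {F | ∃ r aa xv w s A, aa ≠ r ∧ aa ∉ freeF A ∧ s ≠ w ∧ s ∉ freeN A ∧
    FreeForN (Term.cat (Term.var w) (Term.sing (Term.succ (Term.var s)))) w A ∧
    F = biInst r aa xv w s A}

/-- Π⁰₁-WCF₀ : ∀α¬¬∃ζ∀x(ζ(x)=0 ↔ ∀y α(⟨x,y⟩)=0). -/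
def Pi01WCF0 : Formula :=
  .allF 0 (Formula.nneg (.exF 1 (.allN 0
    (Formula.iff (.eq (Term.app (Func.fvar 1) (Term.var 0)) Term.zero)
      (.allN 1 (.eq (Term.app (Func.fvar 0)
        (Term.pair (Term.var 0) (Term.var 1))) Term.zero))))))

/-- Π¹₁-WCF₀ : ∀γ¬¬∃ζ∀x(ζ(x)=0 ↔ ∀α∃y γ(ᾱ(⟨x,y⟩))=0). -/
def Pi11WCF0 : Formula :=
  .allF 0 (Formula.nneg (.exF 1 (.allN 0
    (Formula.iff (.eq (Term.app (Func.fvar 1) (Term.var 0)) Term.zero)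
      (.allF 2 (.exN 1 (.eq (Term.app (Func.fvar 0)
        (Term.bar (Func.fvar 2) (Term.pair (Term.var 0) (Term.var 1)))) Term.zero)))))))

/-- T(e,x,y) as a formula. -/
def TFml (e x y : Term) : Formula := .eq (Term.kT e x y) Term.zero

/-- GR(φ): "φ is general recursive",
∃e[∀x∃yT(e,x,y) & ∀x∀y(T(e,x,y) → U(y)=φ(x))]. -/
def GRof (φ : Func) : Formula :=
  .exN 0 ((Formula.allN 1 (.exN 2 (TFml (Term.var 0) (Term.var 1) (Term.var 2)))).and
    (.allN 1 (.allN 2 ((TFml (Term.var 0) (Term.var 1) (Term.var 2)).imp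
      (.eq (Term.kU (Term.var 2)) (Term.app φ (Term.var 1)))))))

/-- Church's Thesis CT₁ : ∀α GR(α). -/
def CT1 : Formula := .allF 0 (GRof (Func.fvar 0))

/-- ∀α¬¬GR(α). -/
def nnGR : Formula := .allF 0 (Formula.nneg (GRof (Func.fvar 0)))

/-- {τ}[α](x) = y in Kleene's sense: τ(⟨x⟩∗ᾱ(y)) > 0 with minimal y,
used to state continuous choice. -/
def ccApp (t a x y : ℕ) : Formula :=
  .eq (Term.app (Func.fvar t)
    (Term.cat (Term.sing (Term.var x)) (Term.bar (Func.fvar a) (Term.var y)))) Term.zero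

/-- An instance of Kleene's strong continuous choice CC₁₁ (Brouwer's principle
for functions, ˣ27.1): ∀α∃βA(α,β) → ∃τ∀α[{τ}[α] is completely defined &
∀β({τ}[α] = β → A(α,β))]. -/
def cc11Inst (a b t x y z : ℕ) (A : Formula) : Formula :=
  (Formula.allF a (.exF b A)).imp
    (.exF t (.allF a
      ((Formula.allN x (.exN y (Formula.neg (ccApp t a x y)))).and
        (.allF b ((Formula.allN x (.exN y
          ((Formula.eq (Term.app (Func.fvar t) (Term.cat (Term.sing (Term.var x))
              (Term.bar (Func.fvar a) (Term.var y))))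
            (Term.succ (Term.app (Func.fvar b) (Term.var x)))).and
           (.allN z ((tlt (Term.var z) (Term.var y)).imp (ccApp t a x z)))))).imp A)))))

/-- CC₁₁ as a schema. -/
def CC11 : Set Formula :=
  {F | ∃ a b t x y z A, t ∉ freeF A ∧ t ≠ a ∧ t ≠ b ∧ a ≠ b ∧
    x ∉ freeN A ∧ y ∉ freeN A ∧ z ∉ freeN A ∧
    x ≠ y ∧ y ≠ z ∧ x ≠ z ∧
    F = cc11Inst a b t x y z A}

/-! ### The systems -/

/-- Intuitionistic recursive analysis IRA = IA₁ + qf-AC₀₀. -/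
def IRA : Set Formula := IA1 ∪ qfAC00

/-- Kleene's basic system B = IA₁ + AC₀₁ + BI₁. -/
def Bsys : Set Formula := IA1 ∪ AC01 ∪ BI1

/-- Markov's recursive analysis MRA = IRA + CT₁ + MP₁. -/
def MRA : Set Formula := IRA ∪ {CT1, MP1}

/-- The subsystems of B considered in Theorem 5.1. -/
def theoremSystems : List (Set Formula) :=
  [IA1, IRA, IA1 ∪ arAC00, IA1 ∪ AC00u, IA1 ∪ AC00, IA1 ∪ AC01,
   IA1 ∪ {FT1}, IRA ∪ {FT1}, IRA ∪ BI1, IA1 ∪ AC00 ∪ BI1, Bsys]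

end NegInterp


namespace NegInterp


/-! ### Auxiliary development for statement5 -/

/-- Cut: if every axiom of `T` is provable in `T'`, theorems of `T` are theorems of `T'`. -/
theorem Prov.cut {T T' : Set Formula} (h : ∀ B ∈ T, Prov T' B) {A : Formula}
    (hA : Prov T A) : Prov T' A := by
  induction hA with
  | ax hmem => exact h _ hmem
  | k => exact .k
  | s => exact .s
  | andI => exact .andI
  | andE1 => exact .andE1
  | andE2 => exact .andE2
  | orI1 => exact .orI1
  | orI2 => exact .orI2
  | orE => exact .orE
  | exfalso => exact .exfalso
  | mp _ _ ih1 ih2 => exact .mp ih1 ih2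
  | allNE hf => exact .allNE hf
  | allNI hn _ ih => exact .allNI hn ih
  | exNI hf => exact .exNI hf
  | exNE hn _ ih => exact .exNE hn ih
  | allFE hf => exact .allFE hf
  | allFI hn _ ih => exact .allFI hn ih
  | exFI hf => exact .exFI hf
  | exFE hn _ ih => exact .exFE hn ih
  | genN _ ih => exact .genN ih
  | genF _ ih => exact .genF ih

section Hilbert
variable {T : Set Formula} {A B C : Formula}

theorem pa1 (h : Prov T B) : Prov T (A.imp B) := .mp .k h

theorem pmp1 (h1 : Prov T (A.imp (B.imp C))) (h2 : Prov T (A.imp B)) :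
    Prov T (A.imp C) := .mp (.mp .s h1) h2

theorem imp_refl : Prov T (A.imp A) := .mp (.mp .s .k) (.k (B := A))

theorem pcomp (h1 : Prov T (A.imp B)) (h2 : Prov T (B.imp C)) : Prov T (A.imp C) :=
  pmp1 (pa1 h2) h1

theorem pcomp_left (h : Prov T (B.imp C)) : Prov T ((A.imp B).imp (A.imp C)) :=
  .mp .s (pa1 h)

/-- Iterated implication from a list of hypotheses. -/
def ctx : List Formula → Formula → Formula
  | [], A => A
  | B :: Γ, A => B.imp (ctx Γ A)

theorem ctx_append (Γ Δ : List Formula) (A : Formula) :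
    ctx (Γ ++ Δ) A = ctx Γ (ctx Δ A) := by
  induction Γ with
  | nil => rfl
  | cons B Γ ih => simp [ctx, ih]

theorem ctx_thm {Γ : List Formula} (h : Prov T A) : Prov T (ctx Γ A) := by
  induction Γ with
  | nil => exact h
  | cons B Γ ih => exact pa1 ih

theorem ctx_s {Γ : List Formula} :
    Prov T ((ctx Γ (A.imp B)).imp ((ctx Γ A).imp (ctx Γ B))) := by
  induction Γ with
  | nil => exact imp_refl
  | cons C Γ ih => exact pcomp (pcomp_left ih) .s

theorem ctx_mp {Γ : List Formula} (h1 : Prov T (ctx Γ (A.imp B)))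
    (h2 : Prov T (ctx Γ A)) : Prov T (ctx Γ B) := .mp (.mp ctx_s h1) h2

end Hilbert

/-- Embedded natural deduction, used to derive propositional facts in the
Hilbert system. -/
inductive NJ (T : Set Formula) : List Formula → Formula → Prop
  | hyp {Γ : List Formula} {A : Formula} (h : A ∈ Γ) : NJ T Γ A
  | thm {Γ : List Formula} {A : Formula} (h : Prov T A) : NJ T Γ A
  | impI {Γ : List Formula} {A B : Formula} (h : NJ T (A :: Γ) B) : NJ T Γ (A.imp B)
  | impE {Γ : List Formula} {A B : Formula} (h1 : NJ T Γ (A.imp B)) (h2 : NJ T Γ A) : NJ T Γ B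
  | andI {Γ : List Formula} {A B : Formula} (h1 : NJ T Γ A) (h2 : NJ T Γ B) : NJ T Γ (A.and B)
  | andE1 {Γ : List Formula} {A B : Formula} (h : NJ T Γ (A.and B)) : NJ T Γ A
  | andE2 {Γ : List Formula} {A B : Formula} (h : NJ T Γ (A.and B)) : NJ T Γ B
  | orI1 {Γ : List Formula} {A B : Formula} (h : NJ T Γ A) : NJ T Γ (A.or B)
  | orI2 {Γ : List Formula} {A B : Formula} (h : NJ T Γ B) : NJ T Γ (A.or B)
  | orE {Γ : List Formula} {A B C : Formula} (h : NJ T Γ (A.or B)) (h1 : NJ T (A :: Γ) C)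
      (h2 : NJ T (B :: Γ) C) : NJ T Γ C
  | efq {Γ : List Formula} {A : Formula} (h : NJ T Γ .falsum) : NJ T Γ A

theorem ctx_ext {T : Set Formula} {Γ : List Formula} {Δ : List Formula} {A : Formula}
    (hΔ : ∀ B ∈ Γ, Prov T (ctx Δ B)) :
    ∀ B ∈ A :: Γ, Prov T (ctx (Δ ++ [A]) B) := by
  intro B hB
  rw [ctx_append]
  rcases List.mem_cons.mp hB with rfl | hB
  · exact ctx_thm imp_refl
  · exact ctx_mp (ctx_thm .k) (hΔ B hB)

theorem NJ.toProv' {T : Set Formula} {Γ : List Formula} {A : Formula}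
    (h : NJ T Γ A) : ∀ Δ : List Formula,
    (∀ B ∈ Γ, Prov T (ctx Δ B)) → Prov T (ctx Δ A) := by
  induction h with
  | hyp h => exact fun Δ hΔ => hΔ _ h
  | thm h => exact fun Δ _ => ctx_thm h
  | @impI Γ A B h ih =>
    intro Δ hΔ
    have h1 := ih (Δ ++ [A]) (ctx_ext hΔ)
    rwa [ctx_append] at h1
  | impE h1 h2 ih1 ih2 => exact fun Δ hΔ => ctx_mp (ih1 Δ hΔ) (ih2 Δ hΔ)
  | andI h1 h2 ih1 ih2 =>
    exact fun Δ hΔ => ctx_mp (ctx_mp (ctx_thm .andI) (ih1 Δ hΔ)) (ih2 Δ hΔ)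
  | andE1 h ih => exact fun Δ hΔ => ctx_mp (ctx_thm .andE1) (ih Δ hΔ)
  | andE2 h ih => exact fun Δ hΔ => ctx_mp (ctx_thm .andE2) (ih Δ hΔ)
  | orI1 h ih => exact fun Δ hΔ => ctx_mp (ctx_thm .orI1) (ih Δ hΔ)
  | orI2 h ih => exact fun Δ hΔ => ctx_mp (ctx_thm .orI2) (ih Δ hΔ)
  | @orE Γ A B C h h1 h2 ih ih1 ih2 =>
    intro Δ hΔ
    have H1 := ih1 (Δ ++ [A]) (ctx_ext hΔ)
    have H2 := ih2 (Δ ++ [B]) (ctx_ext hΔ)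
    rw [ctx_append] at H1 H2
    exact ctx_mp (ctx_mp (ctx_mp (ctx_thm .orE) H1) H2) (ih Δ hΔ)
  | efq h ih => exact fun Δ hΔ => ctx_mp (ctx_thm .exfalso) (ih Δ hΔ)

theorem NJ.toProv {T : Set Formula} {A : Formula} (h : NJ T [] A) : Prov T A := by
  have := h.toProv' [] (by simp)
  exact this

namespace NJ
variable {T : Set Formula} {Γ : List Formula} {A B C D : Formula}
theorem h0 : NJ T (A :: Γ) A := .hyp (by simp)
theorem h1 : NJ T (B :: A :: Γ) A := .hyp (by simp)
theorem h2 : NJ T (C :: B :: A :: Γ) A := .hyp (by simp)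
theorem h3 : NJ T (D :: C :: B :: A :: Γ) A := .hyp (by simp)
end NJ


/-! ### Propositional facts -/

section Propositional
variable {T : Set Formula} {A B C : Formula}
open Formula

theorem dni : Prov T (A.imp (Formula.nneg A)) :=
  NJ.toProv (.impI (.impI (.impE .h0 .h1)))

theorem contrap (h : Prov T (A.imp B)) : Prov T ((Formula.neg B).imp (Formula.neg A)) :=
  NJ.toProv (.impI (.impI (.impE .h1 (.impE (.thm h) .h0))))

theorem stab_falsum : Prov T ((Formula.nneg Formula.falsum).imp Formula.falsum) :=
  NJ.toProv (.impI (.impE .h0 (.thm imp_refl)))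

theorem stab_neg : Prov T ((Formula.nneg (Formula.neg A)).imp (Formula.neg A)) :=
  NJ.toProv (.impI (.impI (.impE .h1 (.impI (.impE .h0 .h1)))))

theorem stab_imp (hB : Prov T ((Formula.nneg B).imp B)) :
    Prov T ((Formula.nneg (A.imp B)).imp (A.imp B)) :=
  NJ.toProv (.impI (.impI (.impE (.thm hB)
    (.impI (.impE .h2 (.impI (.impE .h1 (.impE .h0 .h2))))))))

theorem stab_and (hA : Prov T ((Formula.nneg A).imp A))
    (hB : Prov T ((Formula.nneg B).imp B)) :
    Prov T ((Formula.nneg (A.and B)).imp (A.and B)) :=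
  NJ.toProv (.impI (.andI
    (.impE (.thm hA) (.impI (.impE .h1 (.impI (.impE .h1 (.andE1 .h0))))))
    (.impE (.thm hB) (.impI (.impE .h1 (.impI (.impE .h1 (.andE2 .h0))))))))

theorem gorI1 : Prov T (A.imp (Formula.neg ((Formula.neg A).and (Formula.neg B)))) :=
  NJ.toProv (.impI (.impI (.impE (.andE1 .h0) .h1)))

theorem gorI2 : Prov T (B.imp (Formula.neg ((Formula.neg A).and (Formula.neg B)))) :=
  NJ.toProv (.impI (.impI (.impE (.andE2 .h0) .h1)))

theorem gorE (hC : Prov T ((Formula.nneg C).imp C)) :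
    Prov T ((A.imp C).imp ((B.imp C).imp
      ((Formula.neg ((Formula.neg A).and (Formula.neg B))).imp C))) :=
  NJ.toProv (.impI (.impI (.impI (.impE (.thm hC) (.impI (.impE .h1 (.andI
    (.impI (.impE .h1 (.impE (NJ.hyp (by simp)) .h0)))
    (.impI (.impE .h1 (.impE (NJ.hyp (by simp)) .h0))))))))))

theorem dn_of_dec (h : Prov T (A.or (Formula.neg A))) :
    Prov T ((Formula.nneg A).imp A) :=
  NJ.toProv (.impI (.orE (.thm h) .h0 (.efq (.impE .h1 .h0))))

theorem swap_neg (e : Prov T (A.imp (Formula.neg B))) :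
    Prov T (B.imp (Formula.neg A)) :=
  NJ.toProv (.impI (.impI (.impE (.impE (.thm e) .h0) .h1)))

end Propositional

/-! ### Structural lemmas on terms and functors -/

section TermLemmas

mutual
theorem tSubN_not_free {n : ℕ} {u : Term} : ∀ t : Term, n ∉ tFN t → tSubN n u t = t
  | .var m, h => by
    simp only [tFN, Set.mem_singleton_iff] at h
    unfold tSubN
    rw [if_neg (fun e : m = n => h e.symm)]
  | .zero, _ => rfl
  | .empt, _ => rfl
  | .succ t, h => by
    simp only [tFN] at h
    simp [tSubN, tSubN_not_free t h]
  | .sing t, h => by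
    simp only [tFN] at h
    simp [tSubN, tSubN_not_free t h]
  | .lh t, h => by
    simp only [tFN] at h
    simp [tSubN, tSubN_not_free t h]
  | .seqc t, h => by
    simp only [tFN] at h
    simp [tSubN, tSubN_not_free t h]
  | .kU t, h => by
    simp only [tFN] at h
    simp [tSubN, tSubN_not_free t h]
  | .add s t, h => by
    simp only [tFN, Set.mem_union] at h
    push_neg at h
    simp [tSubN, tSubN_not_free s h.1, tSubN_not_free t h.2]
  | .mul s t, h => by
    simp only [tFN, Set.mem_union] at h
    push_neg at h
    simp [tSubN, tSubN_not_free s h.1, tSubN_not_free t h.2]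
  | .sub s t, h => by
    simp only [tFN, Set.mem_union] at h
    push_neg at h
    simp [tSubN, tSubN_not_free s h.1, tSubN_not_free t h.2]
  | .pair s t, h => by
    simp only [tFN, Set.mem_union] at h
    push_neg at h
    simp [tSubN, tSubN_not_free s h.1, tSubN_not_free t h.2]
  | .cat s t, h => by
    simp only [tFN, Set.mem_union] at h
    push_neg at h
    simp [tSubN, tSubN_not_free s h.1, tSubN_not_free t h.2]
  | .kT e x y, h => by
    simp only [tFN, Set.mem_union] at h
    push_neg at h
    simp [tSubN, tSubN_not_free e h.1.1, tSubN_not_free x h.1.2, tSubN_not_free y h.2]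
  | .app φ t, h => by
    simp only [tFN, Set.mem_union] at h
    push_neg at h
    simp [tSubN, fSubN_not_free φ h.1, tSubN_not_free t h.2]
  | .bar φ t, h => by
    simp only [tFN, Set.mem_union] at h
    push_neg at h
    simp [tSubN, fSubN_not_free φ h.1, tSubN_not_free t h.2]

theorem fSubN_not_free {n : ℕ} {u : Term} : ∀ φ : Func, n ∉ fFN φ → fSubN n u φ = φ
  | .fvar a, _ => rfl
  | .lam x t, h => by
    by_cases hx : x = n
    · simp [fSubN, hx]
    · simp only [fFN, Set.mem_diff, Set.mem_singleton_iff] at h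
      push_neg at h
      simp [fSubN, hx, tSubN_not_free t (fun hm => hx (h hm).symm)]
end

mutual
theorem tFForN_not_free {u : Term} {n : ℕ} : ∀ t : Term, n ∉ tFN t → tFForN u n t
  | .var _, _ => trivial
  | .zero, _ => trivial
  | .empt, _ => trivial
  | .succ t, h => tFForN_not_free t (by simpa [tFN] using h)
  | .sing t, h => tFForN_not_free t (by simpa [tFN] using h)
  | .lh t, h => tFForN_not_free t (by simpa [tFN] using h)
  | .seqc t, h => tFForN_not_free t (by simpa [tFN] using h)
  | .kU t, h => tFForN_not_free t (by simpa [tFN] using h)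
  | .add s t, h => by
    simp only [tFN, Set.mem_union] at h
    push_neg at h
    exact ⟨tFForN_not_free s h.1, tFForN_not_free t h.2⟩
  | .mul s t, h => by
    simp only [tFN, Set.mem_union] at h
    push_neg at h
    exact ⟨tFForN_not_free s h.1, tFForN_not_free t h.2⟩
  | .sub s t, h => by
    simp only [tFN, Set.mem_union] at h
    push_neg at h
    exact ⟨tFForN_not_free s h.1, tFForN_not_free t h.2⟩
  | .pair s t, h => by
    simp only [tFN, Set.mem_union] at h
    push_neg at h
    exact ⟨tFForN_not_free s h.1, tFForN_not_free t h.2⟩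
  | .cat s t, h => by
    simp only [tFN, Set.mem_union] at h
    push_neg at h
    exact ⟨tFForN_not_free s h.1, tFForN_not_free t h.2⟩
  | .kT e x y, h => by
    simp only [tFN, Set.mem_union] at h
    push_neg at h
    exact ⟨tFForN_not_free e h.1.1, tFForN_not_free x h.1.2, tFForN_not_free y h.2⟩
  | .app φ t, h => by
    simp only [tFN, Set.mem_union] at h
    push_neg at h
    exact ⟨fFForN_not_free φ h.1, tFForN_not_free t h.2⟩
  | .bar φ t, h => by
    simp only [tFN, Set.mem_union] at h
    push_neg at h
    exact ⟨fFForN_not_free φ h.1, tFForN_not_free t h.2⟩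

theorem fFForN_not_free {u : Term} {n : ℕ} : ∀ φ : Func, n ∉ fFN φ → fFForN u n φ
  | .fvar _, _ => trivial
  | .lam x t, h => by
    by_cases hx : x = n
    · exact Or.inl hx
    · refine Or.inr (Or.inl ?_)
      simp only [fFN, Set.mem_diff, Set.mem_singleton_iff] at h
      push_neg at h
      exact fun hm => hx (h hm).symm
end

mutual
theorem tFForN_var {n : ℕ} : ∀ t : Term, tFForN (Term.var n) n t
  | .var _ => trivial
  | .zero => trivial
  | .empt => trivial
  | .succ t => tFForN_var t
  | .sing t => tFForN_var t
  | .lh t => tFForN_var t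
  | .seqc t => tFForN_var t
  | .kU t => tFForN_var t
  | .add s t => ⟨tFForN_var s, tFForN_var t⟩
  | .mul s t => ⟨tFForN_var s, tFForN_var t⟩
  | .sub s t => ⟨tFForN_var s, tFForN_var t⟩
  | .pair s t => ⟨tFForN_var s, tFForN_var t⟩
  | .cat s t => ⟨tFForN_var s, tFForN_var t⟩
  | .kT e x y => ⟨tFForN_var e, tFForN_var x, tFForN_var y⟩
  | .app φ t => ⟨fFForN_var φ, tFForN_var t⟩
  | .bar φ t => ⟨fFForN_var φ, tFForN_var t⟩

theorem fFForN_var {n : ℕ} : ∀ φ : Func, fFForN (Term.var n) n φ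
  | .fvar _ => trivial
  | .lam x t => by
    by_cases hx : x = n
    · exact Or.inl hx
    · exact Or.inr (Or.inr ⟨by simp [tFN, hx], tFForN_var t⟩)
end

mutual
theorem tSubN_var_self {n : ℕ} : ∀ t : Term, tSubN n (Term.var n) t = t
  | .var m => by by_cases h : m = n <;> simp [tSubN, h]
  | .zero => rfl
  | .empt => rfl
  | .succ t => by simp [tSubN, tSubN_var_self t]
  | .sing t => by simp [tSubN, tSubN_var_self t]
  | .lh t => by simp [tSubN, tSubN_var_self t]
  | .seqc t => by simp [tSubN, tSubN_var_self t]
  | .kU t => by simp [tSubN, tSubN_var_self t]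
  | .add s t => by simp [tSubN, tSubN_var_self s, tSubN_var_self t]
  | .mul s t => by simp [tSubN, tSubN_var_self s, tSubN_var_self t]
  | .sub s t => by simp [tSubN, tSubN_var_self s, tSubN_var_self t]
  | .pair s t => by simp [tSubN, tSubN_var_self s, tSubN_var_self t]
  | .cat s t => by simp [tSubN, tSubN_var_self s, tSubN_var_self t]
  | .kT e x y => by simp [tSubN, tSubN_var_self e, tSubN_var_self x, tSubN_var_self y]
  | .app φ t => by simp [tSubN, fSubN_var_self φ, tSubN_var_self t]
  | .bar φ t => by simp [tSubN, fSubN_var_self φ, tSubN_var_self t]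

theorem fSubN_var_self {n : ℕ} : ∀ φ : Func, fSubN n (Term.var n) φ = φ
  | .fvar _ => rfl
  | .lam x t => by by_cases h : x = n <;> simp [fSubN, h, tSubN_var_self t]
end

mutual
theorem tFForF_fvar {a : ℕ} : ∀ t : Term, tFForF (Func.fvar a) a t
  | .var _ => trivial
  | .zero => trivial
  | .empt => trivial
  | .succ t => tFForF_fvar t
  | .sing t => tFForF_fvar t
  | .lh t => tFForF_fvar t
  | .seqc t => tFForF_fvar t
  | .kU t => tFForF_fvar t
  | .add s t => ⟨tFForF_fvar s, tFForF_fvar t⟩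
  | .mul s t => ⟨tFForF_fvar s, tFForF_fvar t⟩
  | .sub s t => ⟨tFForF_fvar s, tFForF_fvar t⟩
  | .pair s t => ⟨tFForF_fvar s, tFForF_fvar t⟩
  | .cat s t => ⟨tFForF_fvar s, tFForF_fvar t⟩
  | .kT e x y => ⟨tFForF_fvar e, tFForF_fvar x, tFForF_fvar y⟩
  | .app φ t => ⟨fFForF_fvar φ, tFForF_fvar t⟩
  | .bar φ t => ⟨fFForF_fvar φ, tFForF_fvar t⟩

theorem fFForF_fvar {a : ℕ} : ∀ φ : Func, fFForF (Func.fvar a) a φ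
  | .fvar _ => trivial
  | .lam _ t => Or.inr ⟨by simp [fFN], tFForF_fvar t⟩
end

mutual
theorem tSubF_fvar_self {a : ℕ} : ∀ t : Term, tSubF a (Func.fvar a) t = t
  | .var _ => rfl
  | .zero => rfl
  | .empt => rfl
  | .succ t => by simp [tSubF, tSubF_fvar_self t]
  | .sing t => by simp [tSubF, tSubF_fvar_self t]
  | .lh t => by simp [tSubF, tSubF_fvar_self t]
  | .seqc t => by simp [tSubF, tSubF_fvar_self t]
  | .kU t => by simp [tSubF, tSubF_fvar_self t]
  | .add s t => by simp [tSubF, tSubF_fvar_self s, tSubF_fvar_self t]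
  | .mul s t => by simp [tSubF, tSubF_fvar_self s, tSubF_fvar_self t]
  | .sub s t => by simp [tSubF, tSubF_fvar_self s, tSubF_fvar_self t]
  | .pair s t => by simp [tSubF, tSubF_fvar_self s, tSubF_fvar_self t]
  | .cat s t => by simp [tSubF, tSubF_fvar_self s, tSubF_fvar_self t]
  | .kT e x y => by simp [tSubF, tSubF_fvar_self e, tSubF_fvar_self x, tSubF_fvar_self y]
  | .app φ t => by simp [tSubF, fSubF_fvar_self φ, tSubF_fvar_self t]
  | .bar φ t => by simp [tSubF, fSubF_fvar_self φ, tSubF_fvar_self t]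

theorem fSubF_fvar_self {a : ℕ} : ∀ φ : Func, fSubF a (Func.fvar a) φ = φ
  | .fvar b => by by_cases h : b = a <;> simp [fSubF, h]
  | .lam x t => by simp [fSubF, tSubF_fvar_self t]
end

mutual
theorem tFN_finite : ∀ t : Term, (tFN t).Finite
  | .var n => by simp [tFN]
  | .zero => by simp [tFN]
  | .empt => by simp [tFN]
  | .succ t => by simpa [tFN] using tFN_finite t
  | .sing t => by simpa [tFN] using tFN_finite t
  | .lh t => by simpa [tFN] using tFN_finite t
  | .seqc t => by simpa [tFN] using tFN_finite t
  | .kU t => by simpa [tFN] using tFN_finite t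
  | .add s t => (tFN_finite s).union (tFN_finite t)
  | .mul s t => (tFN_finite s).union (tFN_finite t)
  | .sub s t => (tFN_finite s).union (tFN_finite t)
  | .pair s t => (tFN_finite s).union (tFN_finite t)
  | .cat s t => (tFN_finite s).union (tFN_finite t)
  | .kT e x y => ((tFN_finite e).union (tFN_finite x)).union (tFN_finite y)
  | .app φ t => (fFN_finite φ).union (tFN_finite t)
  | .bar φ t => (fFN_finite φ).union (tFN_finite t)

theorem fFN_finite : ∀ φ : Func, (fFN φ).Finite
  | .fvar _ => by simp [fFN]
  | .lam x t => (tFN_finite t).diff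
end

end TermLemmas


/-! ### Structural lemmas on formulas -/

section FormulaLemmas

theorem gTrans_subN (n : ℕ) (u : Term) :
    ∀ A : Formula, gTrans (subN n u A) = subN n u (gTrans A)
  | .eq s t => rfl
  | .falsum => rfl
  | .and A B => by simp [subN, gTrans, gTrans_subN n u A, gTrans_subN n u B]
  | .or A B => by simp [subN, gTrans, Formula.neg, gTrans_subN n u A, gTrans_subN n u B]
  | .imp A B => by simp [subN, gTrans, gTrans_subN n u A, gTrans_subN n u B]
  | .allN x A => by by_cases h : x = n <;> simp [subN, gTrans, h, gTrans_subN n u A]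
  | .exN x A => by
    by_cases h : x = n <;> simp [subN, gTrans, Formula.neg, h, gTrans_subN n u A]
  | .allF a A => by simp [subN, gTrans, gTrans_subN n u A]
  | .exF a A => by simp [subN, gTrans, Formula.neg, gTrans_subN n u A]

theorem gTrans_subF (a : ℕ) (ψ : Func) :
    ∀ A : Formula, gTrans (subF a ψ A) = subF a ψ (gTrans A)
  | .eq s t => rfl
  | .falsum => rfl
  | .and A B => by simp [subF, gTrans, gTrans_subF a ψ A, gTrans_subF a ψ B]
  | .or A B => by simp [subF, gTrans, Formula.neg, gTrans_subF a ψ A, gTrans_subF a ψ B]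
  | .imp A B => by simp [subF, gTrans, gTrans_subF a ψ A, gTrans_subF a ψ B]
  | .allN x A => by simp [subF, gTrans, gTrans_subF a ψ A]
  | .exN x A => by simp [subF, gTrans, Formula.neg, gTrans_subF a ψ A]
  | .allF b A => by by_cases h : b = a <;> simp [subF, gTrans, h, gTrans_subF a ψ A]
  | .exF b A => by
    by_cases h : b = a <;> simp [subF, gTrans, Formula.neg, h, gTrans_subF a ψ A]

@[simp] theorem freeN_gTrans : ∀ A : Formula, freeN (gTrans A) = freeN A
  | .eq s t => rfl
  | .falsum => rfl
  | .and A B => by simp [gTrans, freeN, freeN_gTrans A, freeN_gTrans B]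
  | .or A B => by simp [gTrans, freeN, Formula.neg, freeN_gTrans A, freeN_gTrans B]
  | .imp A B => by simp [gTrans, freeN, freeN_gTrans A, freeN_gTrans B]
  | .allN x A => by simp [gTrans, freeN, freeN_gTrans A]
  | .exN x A => by simp [gTrans, freeN, Formula.neg, freeN_gTrans A]
  | .allF a A => by simp [gTrans, freeN, freeN_gTrans A]
  | .exF a A => by simp [gTrans, freeN, Formula.neg, freeN_gTrans A]

@[simp] theorem freeF_gTrans : ∀ A : Formula, freeF (gTrans A) = freeF A
  | .eq s t => rfl
  | .falsum => rfl
  | .and A B => by simp [gTrans, freeF, freeF_gTrans A, freeF_gTrans B]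
  | .or A B => by simp [gTrans, freeF, Formula.neg, freeF_gTrans A, freeF_gTrans B]
  | .imp A B => by simp [gTrans, freeF, freeF_gTrans A, freeF_gTrans B]
  | .allN x A => by simp [gTrans, freeF, freeF_gTrans A]
  | .exN x A => by simp [gTrans, freeF, Formula.neg, freeF_gTrans A]
  | .allF a A => by simp [gTrans, freeF, freeF_gTrans A]
  | .exF a A => by simp [gTrans, freeF, Formula.neg, freeF_gTrans A]

theorem FreeForN_gTrans {u : Term} {n : ℕ} :
    ∀ A : Formula, FreeForN u n A → FreeForN u n (gTrans A)
  | .eq s t, h => h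
  | .falsum, h => h
  | .and A B, h => ⟨FreeForN_gTrans A h.1, FreeForN_gTrans B h.2⟩
  | .or A B, h =>
    ⟨⟨⟨FreeForN_gTrans A h.1, trivial⟩, ⟨FreeForN_gTrans B h.2, trivial⟩⟩, trivial⟩
  | .imp A B, h => ⟨FreeForN_gTrans A h.1, FreeForN_gTrans B h.2⟩
  | .allN x A, h => by
    rcases h with h | h | h
    · exact Or.inl h
    · exact Or.inr (Or.inl (by simpa using h))
    · exact Or.inr (Or.inr ⟨h.1, FreeForN_gTrans A h.2⟩)
  | .exN x A, h => by
    rcases h with h | h | h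
    · exact ⟨Or.inl h, trivial⟩
    · exact ⟨Or.inr (Or.inl (by simpa [freeN, Formula.neg] using h)), trivial⟩
    · exact ⟨Or.inr (Or.inr ⟨h.1, ⟨FreeForN_gTrans A h.2, trivial⟩⟩), trivial⟩
  | .allF b A, h => by
    rcases h with h | h
    · exact Or.inl (by simpa using h)
    · exact Or.inr ⟨h.1, FreeForN_gTrans A h.2⟩
  | .exF b A, h => by
    rcases h with h | h
    · exact ⟨Or.inl (by simpa [freeN, Formula.neg] using h), trivial⟩
    · exact ⟨Or.inr ⟨h.1, ⟨FreeForN_gTrans A h.2, trivial⟩⟩, trivial⟩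

theorem FreeForF_gTrans {ψ : Func} {a : ℕ} :
    ∀ A : Formula, FreeForF ψ a A → FreeForF ψ a (gTrans A)
  | .eq s t, h => h
  | .falsum, h => h
  | .and A B, h => ⟨FreeForF_gTrans A h.1, FreeForF_gTrans B h.2⟩
  | .or A B, h =>
    ⟨⟨⟨FreeForF_gTrans A h.1, trivial⟩, ⟨FreeForF_gTrans B h.2, trivial⟩⟩, trivial⟩
  | .imp A B, h => ⟨FreeForF_gTrans A h.1, FreeForF_gTrans B h.2⟩
  | .allN x A, h => by
    rcases h with h | h
    · exact Or.inl (by simpa using h)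
    · exact Or.inr ⟨h.1, FreeForF_gTrans A h.2⟩
  | .exN x A, h => by
    rcases h with h | h
    · exact ⟨Or.inl (by simpa [freeF, Formula.neg] using h), trivial⟩
    · exact ⟨Or.inr ⟨h.1, ⟨FreeForF_gTrans A h.2, trivial⟩⟩, trivial⟩
  | .allF b A, h => by
    rcases h with h | h | h
    · exact Or.inl h
    · exact Or.inr (Or.inl (by simpa using h))
    · exact Or.inr (Or.inr ⟨h.1, FreeForF_gTrans A h.2⟩)
  | .exF b A, h => by
    rcases h with h | h | h
    · exact ⟨Or.inl h, trivial⟩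
    · exact ⟨Or.inr (Or.inl (by simpa [freeF, Formula.neg] using h)), trivial⟩
    · exact ⟨Or.inr (Or.inr ⟨h.1, ⟨FreeForF_gTrans A h.2, trivial⟩⟩), trivial⟩

theorem subN_var_self (n : ℕ) : ∀ A : Formula, subN n (Term.var n) A = A
  | .eq s t => by simp [subN, tSubN_var_self]
  | .falsum => rfl
  | .and A B => by simp [subN, subN_var_self n A, subN_var_self n B]
  | .or A B => by simp [subN, subN_var_self n A, subN_var_self n B]
  | .imp A B => by simp [subN, subN_var_self n A, subN_var_self n B]
  | .allN x A => by by_cases h : x = n <;> simp [subN, h, subN_var_self n A]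
  | .exN x A => by by_cases h : x = n <;> simp [subN, h, subN_var_self n A]
  | .allF a A => by simp [subN, subN_var_self n A]
  | .exF a A => by simp [subN, subN_var_self n A]

theorem subF_fvar_self (a : ℕ) : ∀ A : Formula, subF a (Func.fvar a) A = A
  | .eq s t => by simp [subF, tSubF_fvar_self]
  | .falsum => rfl
  | .and A B => by simp [subF, subF_fvar_self a A, subF_fvar_self a B]
  | .or A B => by simp [subF, subF_fvar_self a A, subF_fvar_self a B]
  | .imp A B => by simp [subF, subF_fvar_self a A, subF_fvar_self a B]
  | .allN x A => by simp [subF, subF_fvar_self a A]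
  | .exN x A => by simp [subF, subF_fvar_self a A]
  | .allF b A => by by_cases h : b = a <;> simp [subF, h, subF_fvar_self a A]
  | .exF b A => by by_cases h : b = a <;> simp [subF, h, subF_fvar_self a A]

theorem FreeForN_var (n : ℕ) : ∀ A : Formula, FreeForN (Term.var n) n A
  | .eq s t => ⟨tFForN_var s, tFForN_var t⟩
  | .falsum => trivial
  | .and A B => ⟨FreeForN_var n A, FreeForN_var n B⟩
  | .or A B => ⟨FreeForN_var n A, FreeForN_var n B⟩
  | .imp A B => ⟨FreeForN_var n A, FreeForN_var n B⟩
  | .allN x A => by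
    by_cases h : x = n
    · exact Or.inl h
    · exact Or.inr (Or.inr ⟨by simp [tFN, h], FreeForN_var n A⟩)
  | .exN x A => by
    by_cases h : x = n
    · exact Or.inl h
    · exact Or.inr (Or.inr ⟨by simp [tFN, h], FreeForN_var n A⟩)
  | .allF b A => Or.inr ⟨by simp [tFF], FreeForN_var n A⟩
  | .exF b A => Or.inr ⟨by simp [tFF], FreeForN_var n A⟩

theorem FreeForF_fvar (a : ℕ) : ∀ A : Formula, FreeForF (Func.fvar a) a A
  | .eq s t => ⟨tFForF_fvar s, tFForF_fvar t⟩
  | .falsum => trivial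
  | .and A B => ⟨FreeForF_fvar a A, FreeForF_fvar a B⟩
  | .or A B => ⟨FreeForF_fvar a A, FreeForF_fvar a B⟩
  | .imp A B => ⟨FreeForF_fvar a A, FreeForF_fvar a B⟩
  | .allN x A => Or.inr ⟨by simp [fFN], FreeForF_fvar a A⟩
  | .exN x A => Or.inr ⟨by simp [fFN], FreeForF_fvar a A⟩
  | .allF b A => by
    by_cases h : b = a
    · exact Or.inl h
    · exact Or.inr (Or.inr ⟨by simp [fFF, h], FreeForF_fvar a A⟩)
  | .exF b A => by
    by_cases h : b = a
    · exact Or.inl h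
    · exact Or.inr (Or.inr ⟨by simp [fFF, h], FreeForF_fvar a A⟩)

end FormulaLemmas

/-! ### Derived quantifier rules -/

section Quantifier
variable {T : Set Formula} {A : Formula}

theorem allN_self {x : ℕ} : Prov T ((Formula.allN x A).imp A) := by
  have h := Prov.allNE (T := T) (A := A) (u := Term.var x) (FreeForN_var x A)
  rwa [subN_var_self] at h

theorem allF_self {a : ℕ} : Prov T ((Formula.allF a A).imp A) := by
  have h := Prov.allFE (T := T) (A := A) (ψ := Func.fvar a) (FreeForF_fvar a A)
  rwa [subF_fvar_self] at h

theorem stab_allN (x : ℕ) (h : Prov T ((Formula.nneg A).imp A)) :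
    Prov T ((Formula.nneg (Formula.allN x A)).imp (Formula.allN x A)) := by
  refine Prov.allNI ?_ (pcomp (contrap (contrap (allN_self (x := x)))) h)
  simp [Formula.nneg, Formula.neg, freeN]

theorem stab_allF (a : ℕ) (h : Prov T ((Formula.nneg A).imp A)) :
    Prov T ((Formula.nneg (Formula.allF a A)).imp (Formula.allF a A)) := by
  refine Prov.allFI ?_ (pcomp (contrap (contrap (allF_self (a := a)))) h)
  simp [Formula.nneg, Formula.neg, freeF]

end Quantifier


/-! ### Arithmetic: decidability and stability of equations in IA₁ -/

/-- Decidability disjunction for an equation. -/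
def tDec (s t : Term) : Formula := (Formula.eq s t).or (Formula.neg (Formula.eq s t))

theorem subN_tDec {k : ℕ} {u s t : Term} :
    subN k u (tDec s t) = tDec (tSubN k u s) (tSubN k u t) := by
  simp [tDec, subN, Formula.neg]

theorem FreeForN_tDec {u : Term} {k : ℕ} {s t : Term}
    (h1 : tFForN u k s) (h2 : tFForN u k t) : FreeForN u k (tDec s t) :=
  ⟨⟨h1, h2⟩, ⟨⟨h1, h2⟩, trivial⟩⟩

section Arithmetic
variable {T : Set Formula}

theorem pValid (hT : IA1 ⊆ T) {s t : Term} (h : ∀ ρ σ, evalT ρ σ s = evalT ρ σ t) :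
    Prov T (Formula.eq s t) :=
  .ax (hT (Set.mem_union_left _ (Set.mem_union_left _ (Set.mem_union_left _
    (Set.mem_union_left _ ⟨s, t, rfl, h⟩)))))

theorem pLeib (hT : IA1 ⊆ T) {n : ℕ} {s t : Term} {A : Formula}
    (h1 : FreeForN s n A) (h2 : FreeForN t n A) :
    Prov T ((Formula.eq s t).imp ((subN n s A).imp (subN n t A))) :=
  .ax (hT (Set.mem_union_left _ (Set.mem_union_left _ (Set.mem_union_left _
    (Set.mem_union_right _ ⟨n, s, t, A, h1, h2, rfl⟩)))))

theorem pSucInj (hT : IA1 ⊆ T) {s t : Term} :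
    Prov T ((Formula.eq (Term.succ s) (Term.succ t)).imp (Formula.eq s t)) :=
  .ax (hT (Set.mem_union_left _ (Set.mem_union_left _ (Set.mem_union_right _
    (Set.mem_union_left _ ⟨s, t, rfl⟩)))))

theorem pSucNe (hT : IA1 ⊆ T) (t : Term) :
    Prov T (Formula.neg (Formula.eq (Term.succ t) Term.zero)) :=
  .ax (hT (Set.mem_union_left _ (Set.mem_union_left _ (Set.mem_union_right _
    (Set.mem_union_right _ ⟨t, rfl⟩)))))

theorem pInd (hT : IA1 ⊆ T) (x : ℕ) (A : Formula) :
    Prov T (((subN x Term.zero A).and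
      (Formula.allN x (A.imp (subN x (Term.succ (Term.var x)) A)))).imp
      (Formula.allN x A)) :=
  .ax (hT (Set.mem_union_left _ (Set.mem_union_right _ ⟨x, A, rfl⟩)))

theorem eq_refl (hT : IA1 ⊆ T) (t : Term) : Prov T (Formula.eq t t) := pValid hT (fun _ _ => rfl)

theorem zero_ne_succ (hT : IA1 ⊆ T) (t : Term) :
    Prov T (Formula.neg (Formula.eq Term.zero (Term.succ t))) := by
  have L := pLeib hT (n := 0) (s := Term.zero) (t := Term.succ t)
      (A := Formula.eq (Term.var 0) Term.zero) ⟨trivial, trivial⟩ ⟨trivial, trivial⟩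
  simp only [subN] at L
  simp only [tSubN, if_pos] at L
  exact NJ.toProv (.impI (.impE (.thm (pSucNe hT t))
    (.impE (.impE (.thm L) .h0) (.thm (eq_refl hT Term.zero)))))

theorem eq_dec (hT : IA1 ⊆ T) {n m p : ℕ} (hnm : n ≠ m) (hpn : p ≠ n) (hpm : p ≠ m) :
    Prov T (Formula.allN n (Formula.allN m (tDec (Term.var n) (Term.var m)))) := by
  have hmn : m ≠ n := hnm.symm
  have hnp : n ≠ p := hpn.symm
  have hmp : m ≠ p := hpm.symm
  -- Step A : ⊢ ∀m (0 = m ∨ ¬ 0 = m)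
  have base0 : Prov T (subN m Term.zero (tDec Term.zero (Term.var m))) := by
    rw [subN_tDec]
    simp only [tSubN, if_pos]
    exact .mp .orI1 (eq_refl hT Term.zero)
  have stepA : Prov T (Formula.allN m ((tDec Term.zero (Term.var m)).imp
      (subN m (Term.succ (Term.var m)) (tDec Term.zero (Term.var m))))) := by
    have e : subN m (Term.succ (Term.var m)) (tDec Term.zero (Term.var m))
        = tDec Term.zero (Term.succ (Term.var m)) := by
      rw [subN_tDec]; simp [tSubN]
    rw [e]
    exact .genN (pa1 (.mp .orI2 (zero_ne_succ hT (Term.var m))))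
  have A0 : Prov T (Formula.allN m (tDec Term.zero (Term.var m))) :=
    .mp (pInd hT m _) (.mp (.mp .andI base0) stepA)
  -- Step B inner : ⊢ (∀m (n = m ∨ ¬n = m)).imp (∀m (S n = m ∨ ¬ S n = m))
  have c1 : Prov T ((Formula.eq (Term.var n) (Term.var m)).imp
      (Formula.eq (Term.succ (Term.var n)) (Term.succ (Term.var m)))) := by
    have L := pLeib hT (n := p) (s := Term.var n) (t := Term.var m)
      (A := Formula.eq (Term.succ (Term.var n)) (Term.succ (Term.var p)))
      ⟨trivial, trivial⟩ ⟨trivial, trivial⟩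
    simp only [subN, tSubN, if_pos, if_neg hnp] at L
    exact NJ.toProv (.impI (.impE (.impE (.thm L) .h0)
      (.thm (eq_refl hT (Term.succ (Term.var n))))))
  have c2 : Prov T ((Formula.neg (Formula.eq (Term.var n) (Term.var m))).imp
      (Formula.neg (Formula.eq (Term.succ (Term.var n)) (Term.succ (Term.var m))))) :=
    contrap (pSucInj hT)
  have dD : Prov T ((tDec (Term.var n) (Term.var m)).imp
      (tDec (Term.succ (Term.var n)) (Term.succ (Term.var m)))) :=
    NJ.toProv (.impI (.orE .h0 (.orI1 (.impE (.thm c1) .h0))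
      (.orI2 (.impE (.thm c2) .h0))))
  have hstep : Prov T ((Formula.allN m (tDec (Term.var n) (Term.var m))).imp
      ((tDec (Term.succ (Term.var n)) (Term.var m)).imp
        (tDec (Term.succ (Term.var n)) (Term.succ (Term.var m))))) :=
    NJ.toProv (.impI (.impI (.impE (.thm dD) (.impE (.thm allN_self) .h1))))
  have hstep2 : Prov T ((Formula.allN m (tDec (Term.var n) (Term.var m))).imp
      (Formula.allN m ((tDec (Term.succ (Term.var n)) (Term.var m)).imp
        (subN m (Term.succ (Term.var m)) (tDec (Term.succ (Term.var n)) (Term.var m)))))) := by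
    have e : subN m (Term.succ (Term.var m)) (tDec (Term.succ (Term.var n)) (Term.var m))
        = tDec (Term.succ (Term.var n)) (Term.succ (Term.var m)) := by
      rw [subN_tDec]; simp [tSubN, hnm]
    rw [e]
    refine Prov.allNI ?_ hstep
    simp [freeN, tDec, Formula.neg]
  have b1 : Prov T (subN m Term.zero (tDec (Term.succ (Term.var n)) (Term.var m))) := by
    rw [subN_tDec]
    simp only [tSubN, if_pos, if_neg hnm]
    exact .mp .orI2 (pSucNe hT (Term.var n))
  have comb : Prov T ((Formula.allN m (tDec (Term.var n) (Term.var m))).imp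
      ((subN m Term.zero (tDec (Term.succ (Term.var n)) (Term.var m))).and
        (Formula.allN m ((tDec (Term.succ (Term.var n)) (Term.var m)).imp
          (subN m (Term.succ (Term.var m)) (tDec (Term.succ (Term.var n)) (Term.var m))))))) :=
    NJ.toProv (.impI (.andI (.thm b1) (.impE (.thm hstep2) .h0)))
  have innerResult : Prov T ((Formula.allN m (tDec (Term.var n) (Term.var m))).imp
      (Formula.allN m (tDec (Term.succ (Term.var n)) (Term.var m)))) :=
    pcomp comb (pInd hT m _)
  -- Step B outer
  have eB : subN n (Term.succ (Term.var n)) (Formula.allN m (tDec (Term.var n) (Term.var m)))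
      = Formula.allN m (tDec (Term.succ (Term.var n)) (Term.var m)) := by
    simp [subN, hmn, tDec, Formula.neg, tSubN]
  have stepB : Prov T (Formula.allN n ((Formula.allN m (tDec (Term.var n) (Term.var m))).imp
      (subN n (Term.succ (Term.var n)) (Formula.allN m (tDec (Term.var n) (Term.var m)))))) := by
    rw [eB]
    exact .genN innerResult
  have baseB : Prov T (subN n Term.zero (Formula.allN m (tDec (Term.var n) (Term.var m)))) := by
    have e : subN n Term.zero (Formula.allN m (tDec (Term.var n) (Term.var m)))
        = Formula.allN m (tDec Term.zero (Term.var m)) := by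
      simp [subN, hmn, tDec, Formula.neg, tSubN]
    rw [e]; exact A0
  exact .mp (pInd hT n _) (.mp (.mp .andI baseB) stepB)

theorem eq_stab (hT : IA1 ⊆ T) (s t : Term) :
    Prov T ((Formula.nneg (Formula.eq s t)).imp (Formula.eq s t)) := by
  obtain ⟨n, hn⟩ := (((tFN_finite s).union (tFN_finite t)).infinite_compl).nonempty
  obtain ⟨m, hm⟩ := ((((tFN_finite s).union (tFN_finite t)).union
    (Set.finite_singleton n)).infinite_compl).nonempty
  simp only [Set.mem_compl_iff, Set.mem_union, Set.mem_singleton_iff] at hn hm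
  push_neg at hn hm
  have hnm : n ≠ m := fun h => hm.2 h.symm
  have dec := eq_dec hT (n := n) (m := m) (p := n + m + 1) hnm (by omega) (by omega)
  have hf1 : FreeForN s n (Formula.allN m (tDec (Term.var n) (Term.var m))) :=
    Or.inr (Or.inr ⟨hm.1.1, FreeForN_tDec trivial trivial⟩)
  have i1 := Prov.allNE (T := T) (u := s) hf1
  have e1 : subN n s (Formula.allN m (tDec (Term.var n) (Term.var m)))
      = Formula.allN m (tDec s (Term.var m)) := by
    simp [subN, hnm.symm, tDec, Formula.neg, tSubN]
  rw [e1] at i1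
  have hf2 : FreeForN t m (tDec s (Term.var m)) :=
    FreeForN_tDec (tFForN_not_free s hm.1.1) trivial
  have i2 := Prov.allNE (T := T) (u := t) hf2
  have e2 : subN m t (tDec s (Term.var m)) = tDec s t := by
    rw [subN_tDec, tSubN_not_free s hm.1.1]
    simp [tSubN]
  rw [e2] at i2
  exact dn_of_dec (.mp i2 (.mp i1 dec))

end Arithmetic


/-! ### Stability of negative translations, soundness of the g-translation -/

theorem gStable {T : Set Formula} (hT : IA1 ⊆ T) :
    ∀ A : Formula, Prov T ((Formula.nneg (gTrans A)).imp (gTrans A))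
  | .eq s t => eq_stab hT s t
  | .falsum => stab_falsum
  | .and A B => stab_and (gStable hT A) (gStable hT B)
  | .or _ _ => stab_neg
  | .imp A B => stab_imp (gStable hT B)
  | .allN x A => stab_allN x (gStable hT A)
  | .exN _ _ => stab_neg
  | .allF a A => stab_allF a (gStable hT A)
  | .exF _ _ => stab_neg

/-- The g-translation of every axiom of IA₁ is provable from IA₁. -/
theorem gIA1 {T : Set Formula} (hT : IA1 ⊆ T) {B : Formula} (hB : B ∈ IA1) :
    Prov T (gTrans B) := by
  rcases hB with (((h | h) | h) | h) | h
  · obtain ⟨s, t, rfl, hv⟩ := h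
    exact pValid hT hv
  · obtain ⟨n, s, t, A, h1, h2, rfl⟩ := h
    have L := pLeib hT (A := gTrans A) (FreeForN_gTrans A h1) (FreeForN_gTrans A h2)
    simp only [gTrans, gTrans_subN]
    exact L
  · rcases h with h | h
    · obtain ⟨s, t, rfl⟩ := h
      exact pSucInj hT
    · obtain ⟨t, rfl⟩ := h
      exact pSucNe hT t
  · obtain ⟨x, A, rfl⟩ := h
    have L := pInd hT x (gTrans A)
    simp only [gTrans, gTrans_subN]
    exact L
  · obtain ⟨x, t, s, hf, rfl⟩ := h
    exact .ax (hT (Set.mem_union_right _ ⟨x, t, s, hf, rfl⟩))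

/-- Soundness of the Gödel–Gentzen translation: if `A` is provable in
`S + DNE` then `gTrans A` is provable in any extension of IA₁ proving the
g-translations of all axioms of `S`. -/
theorem g_sound {S T : Set Formula} (hT : IA1 ⊆ T)
    (hS : ∀ B ∈ S, Prov T (gTrans B)) {A : Formula}
    (h : Prov (S ∪ DNE) A) : Prov T (gTrans A) := by
  induction h with
  | ax hmem =>
    rcases hmem with hmem | hmem
    · exact hS _ hmem
    · obtain ⟨C, rfl⟩ := hmem
      exact gStable hT C
  | k => exact .k
  | s => exact .s
  | andI => exact .andI
  | andE1 => exact .andE1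
  | andE2 => exact .andE2
  | orI1 => exact gorI1
  | orI2 => exact gorI2
  | @orE A B C => exact gorE (gStable hT C)
  | exfalso => exact .exfalso
  | mp _ _ ih1 ih2 => exact .mp ih1 ih2
  | @allNE n A u hf =>
    simp only [gTrans, gTrans_subN]
    exact .allNE (FreeForN_gTrans A hf)
  | @allNI n A B hn _ ih =>
    exact .allNI (by simpa using hn) ih
  | @exNI n A u hf =>
    have hf' : FreeForN u n (Formula.neg (gTrans A)) := ⟨FreeForN_gTrans A hf, trivial⟩
    have e : Prov T ((Formula.allN n (Formula.neg (gTrans A))).imp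
        (Formula.neg (subN n u (gTrans A)))) := Prov.allNE hf'
    simp only [gTrans, gTrans_subN]
    exact swap_neg e
  | @exNE n A B hn _ ih =>
    have c1 : Prov T ((Formula.neg (gTrans B)).imp (Formula.neg (gTrans A))) := contrap ih
    have c2 := Prov.allNI (n := n) (by simp [Formula.neg, freeN, hn]) c1
    exact pcomp (contrap c2) (gStable hT B)
  | @allFE a A ψ hf =>
    simp only [gTrans, gTrans_subF]
    exact .allFE (FreeForF_gTrans A hf)
  | @allFI a A B hn _ ih =>
    exact .allFI (by simpa using hn) ih
  | @exFI a A ψ hf =>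
    have hf' : FreeForF ψ a (Formula.neg (gTrans A)) := ⟨FreeForF_gTrans A hf, trivial⟩
    have e : Prov T ((Formula.allF a (Formula.neg (gTrans A))).imp
        (Formula.neg (subF a ψ (gTrans A)))) := Prov.allFE hf'
    simp only [gTrans, gTrans_subF]
    exact swap_neg e
  | @exFE a A B hn _ ih =>
    have c1 : Prov T ((Formula.neg (gTrans B)).imp (Formula.neg (gTrans A))) := contrap ih
    have c2 := Prov.allFI (a := a) (by simp [Formula.neg, freeF, hn]) c1
    exact pcomp (contrap c2) (gStable hT B)
  | genN _ ih => exact .genN ih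
  | genF _ ih => exact .genF ih

/-- (IA₁ + AC₀₁)^{+g} = IA₁ + AC₀₁ + (AC₀₁)^g, where (AC₀₁)^g is
the schema of Gödel–Gentzen negative translations of all instances of AC₀₁. -/
theorem statement5 :
    SameTheory (minClassExt (IA1 ∪ AC01)) (IA1 ∪ AC01 ∪ gTrans '' AC01) := by
  have hT' : IA1 ⊆ IA1 ∪ AC01 ∪ gTrans '' AC01 := fun F hF =>
    Set.mem_union_left _ (Set.mem_union_left _ hF)
  intro A
  constructor
  · intro h
    refine Prov.cut ?_ h
    intro B hB
    rcases hB with hB | hB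
    · exact .ax (Set.mem_union_left _ hB)
    · obtain ⟨C, hC, rfl⟩ := hB
      refine g_sound hT' ?_ hC
      intro F hF
      rcases hF with hF | hF
      · exact gIA1 hT' hF
      · exact .ax (Set.mem_union_right _ ⟨F, hF, rfl⟩)
  · intro h
    refine Prov.cut ?_ h
    intro B hB
    rcases hB with hB | hB
    · exact .ax (Set.mem_union_left _ hB)
    · obtain ⟨C, hC, rfl⟩ := hB
      exact .ax (Set.mem_union_right _
        ⟨C, .ax (Set.mem_union_left _ (Set.mem_union_right _ hC)), rfl⟩)

end NegInterp
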